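/- Every finite stratified ground normal logic program has at least one stable model. -/

import Mathlib

namespace ASP

/-- A ground normal rule: a head atom, a finite set of positive body atoms,
and a finite set of negated body atoms. -/
structure Rule (α : Type) where
  head : α
  pos : Finset α
  neg : Finset α
deriving DecidableEq

variable {α : Type}

/-- An interpretation `M` satisfies a rule `r` if `head r ∈ M` whenever
`pos r ⊆ M` and `neg r ∩ M = ∅`. -/
def ruleSat (M : Set α) (r : Rule α) : Prop :=
  ((↑r.pos : Set α) ⊆ M ∧ ∀ a ∈ r.neg, a ∉ M) → r.head ∈ M

/-- `M` is a model of a program if it satisfies every rule. -/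
def isModel (M : Set α) (P : Set (Rule α)) : Prop :=
  ∀ r ∈ P, ruleSat M r

/-- A definite program has no negated body atoms. -/
def isDefinite (P : Set (Rule α)) : Prop :=
  ∀ r ∈ P, r.neg = ∅

/-- The reduct `P^M`: the definite program
`{(head r, pos r, ∅) : r ∈ P, neg r ∩ M = ∅}`. -/
def reduct (P : Set (Rule α)) (M : Set α) : Set (Rule α) :=
  {r' | ∃ r ∈ P, (∀ a ∈ r.neg, a ∉ M) ∧ r' = ⟨r.head, r.pos, ∅⟩}

/-- `M` is the least model of `P`: a model contained in every model of `P`. -/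
def isLeastModel (M : Set α) (P : Set (Rule α)) : Prop :=
  isModel M P ∧ ∀ M', isModel M' P → M ⊆ M'

/-- `M` is a stable model (answer set) of `P` if `M` is the least model of
the reduct `P^M`. -/
def isStable (M : Set α) (P : Set (Rule α)) : Prop :=
  isLeastModel M (reduct P M)

/-- A program is stratified if there is a stratification function `s` on atoms. -/
def isStratified (P : Set (Rule α)) : Prop :=
  ∃ s : α → ℕ, ∀ r ∈ P,
    (∀ a ∈ r.pos, s a ≤ s r.head) ∧ (∀ a ∈ r.neg, s a < s r.head)

/-- `P ⊢ a` : atom `a` belongs to every stable model of `P`. -/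
def entails (P : Set (Rule α)) (a : α) : Prop :=
  ∀ M, isStable M P → a ∈ M

/-- `H1 ≤ H2` for finite ground programs: there is an injective map `f` from the
rules of `H1` to the rules of `H2` preserving heads and (weakly) enlarging bodies. -/
def progLE (H1 H2 : Finset (Rule α)) : Prop :=
  ∃ f : Rule α → Rule α, Set.InjOn f ↑H1 ∧
    ∀ r ∈ H1, f r ∈ H2 ∧ (f r).head = r.head ∧ r.pos ⊆ (f r).pos ∧ r.neg ⊆ (f r).neg

/-- `H1 < H2` iff `H1 ≤ H2` and `H1 ≠ H2`. -/
def progLT (H1 H2 : Finset (Rule α)) : Prop :=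
  progLE H1 H2 ∧ H1 ≠ H2

/-- A context-dependent example: an observation program `obs` together with finite
sets of positive and negative example atoms. -/
structure ILPExample (α : Type) where
  obs : Set (Rule α)
  epos : Finset α
  eneg : Finset α

/-- `H` covers example `E` (relative to background `B`): every positive example atom
belongs to every stable model of `B ∪ O ∪ H`, and no negative example atom does. -/
def covers (B : Set (Rule α)) (H : Finset (Rule α)) (E : ILPExample α) : Prop :=
  (∀ a ∈ E.epos, entails (B ∪ E.obs ∪ ↑H) a) ∧
  (∀ a ∈ E.eneg, ¬ entails (B ∪ E.obs ∪ ↑H) a)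

/-- `H` is a solution of the ILP task for distinct examples `(B, L, Es)`. -/
def isSolution (B L : Set (Rule α)) (Es : List (ILPExample α))
    (H : Finset (Rule α)) : Prop :=
  (↑H : Set (Rule α)) ⊆ L ∧ ∀ E ∈ Es, covers B H E

/-- A solution `H` is minimal if no solution `H'` satisfies `H' < H`. -/
def isMinimalSolution (B L : Set (Rule α)) (Es : List (ILPExample α))
    (H : Finset (Rule α)) : Prop :=
  isSolution B L Es H ∧ ¬∃ H', isSolution B L Es H' ∧ progLT H' H


noncomputable section
open Classical

/-- The intersection of all models. -/
def leastModel (P : Set (Rule α)) : Set α := {x | ∀ M, isModel M P → x ∈ M}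

lemma leastModel_subset {P : Set (Rule α)} {M : Set α} (h : isModel M P) :
    leastModel P ⊆ M := fun _ hx => hx M h

lemma rule_eta {r : Rule α} (h : r.neg = ∅) : r = ⟨r.head, r.pos, ∅⟩ := by
  cases r; simp_all

lemma leastModel_isModel {P : Set (Rule α)} (hdef : isDefinite P) :
    isModel (leastModel P) P := by
  intro r hr h M hM
  refine hM r hr ⟨fun b hb => h.1 hb M hM, ?_⟩
  simp [hdef r hr]

lemma definite_mem_reduct {P : Set (Rule α)} {M : Set α} {r : Rule α}
    (hr : r ∈ P) (hneg : r.neg = ∅) : r ∈ reduct P M := by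
  exact ⟨r, hr, by simp [hneg], rule_eta hneg⟩

lemma sum_image_le' {β γ : Type*} [DecidableEq γ] (s : Finset β) (f : β → γ) (g : γ → ℕ) :
    ∑ x ∈ s.image f, g x ≤ ∑ x ∈ s, g (f x) := by
  classical
  induction s using Finset.induction with
  | empty => simp
  | @insert a s h ih =>
    rw [Finset.image_insert, Finset.sum_insert h]
    by_cases h2 : f a ∈ Finset.image f s
    · rw [Finset.insert_eq_self.2 h2]; omega
    · rw [Finset.sum_insert h2]; omega

/-- Key invariant: on low strata (where the program is definite), any stable
model agrees with the least model of the low part. -/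
lemma low_strata_iff {Q : Set (Rule α)} {s : α → ℕ}
    (hs : ∀ r ∈ Q, (∀ a ∈ r.pos, s a ≤ s r.head) ∧ (∀ a ∈ r.neg, s a < s r.head))
    {k : ℕ} (hdef : isDefinite {r ∈ Q | s r.head ≤ k})
    {M : Set α} (hM : isStable M Q) {x : α} (hx : s x ≤ k) :
    x ∈ M ↔ x ∈ leastModel {r ∈ Q | s r.head ≤ k} := by
  set L : Set (Rule α) := {r ∈ Q | s r.head ≤ k} with hL
  have hModL : isModel M L := by
    intro r hr hcond
    exact hM.1 r (definite_mem_reduct hr.1 (hdef r hr)) hcond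
  have hLsub : leastModel L ⊆ M := leastModel_subset hModL
  set N : Set α := leastModel L ∪ {y ∈ M | k < s y} with hN
  have hNM : N ⊆ M := by
    intro y hy
    rcases hy with hy | hy
    · exact hLsub hy
    · exact hy.1
  have hNmod : isModel N (reduct Q M) := by
    rintro r' ⟨r, hrQ, hneg, rfl⟩ hcond
    have hposM : (↑r.pos : Set α) ⊆ M := fun b hb => hNM (hcond.1 hb)
    have hheadM : r.head ∈ M :=
      hM.1 ⟨r.head, r.pos, ∅⟩ ⟨r, hrQ, hneg, rfl⟩ ⟨hposM, by simp⟩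
    by_cases hk : s r.head ≤ k
    · have hrL : r ∈ L := ⟨hrQ, hk⟩
      have hposL : (↑r.pos : Set α) ⊆ leastModel L := by
        intro b hb
        rcases hcond.1 hb with hb2 | hb2
        · exact hb2
        · exact absurd (le_trans ((hs r hrQ).1 b hb) hk) (not_le.2 hb2.2)
      left
      exact leastModel_isModel hdef r hrL ⟨hposL, by simp [hdef r hrL]⟩
    · right
      exact ⟨hheadM, not_le.1 hk⟩
  have hMN : M ⊆ N := hM.2 N hNmod
  constructor
  · intro hxM
    rcases hMN hxM with h | h
    · exact h
    · exact absurd hx (not_le.2 h.2)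
  · intro h; exact hLsub h


lemma main_ind : ∀ (n : ℕ) (Q : Finset (Rule α)) (s : α → ℕ),
    (∀ r ∈ Q, (∀ a ∈ r.pos, s a ≤ s r.head) ∧ (∀ a ∈ r.neg, s a < s r.head)) →
    (∑ r ∈ Q, r.neg.card) = n → ∃ M, isStable M (↑Q : Set (Rule α)) := by
  intro n
  induction n using Nat.strong_induction_on with
  | _ n ih =>
    intro Q s hs hsum
    have hsQ : ∀ r ∈ (↑Q : Set (Rule α)),
        (∀ a ∈ r.pos, s a ≤ s r.head) ∧ (∀ a ∈ r.neg, s a < s r.head) :=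
      fun r hr => hs r hr
    by_cases hz : ∀ r ∈ Q, r.neg = ∅
    · -- definite case
      refine ⟨leastModel ↑Q, ?_⟩
      have hdef : isDefinite (↑Q : Set (Rule α)) := fun r hr => hz r hr
      have hred : reduct (↑Q : Set (Rule α)) (leastModel ↑Q) = ↑Q := by
        ext r'
        constructor
        · rintro ⟨r, hr, -, rfl⟩
          rw [← rule_eta (hdef r hr)]; exact hr
        · intro hr'; exact definite_mem_reduct hr' (hdef r' hr')
      constructor
      · rw [hred]; exact leastModel_isModel hdef
      · rw [hred]; intro M' hM'; exact leastModel_subset hM'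
    · push_neg at hz
      obtain ⟨r0, hr0Q, hr0⟩ := hz
      have hNA : (Q.biUnion Rule.neg).Nonempty := by
        obtain ⟨b, hb⟩ := hr0
        exact ⟨b, Finset.mem_biUnion.2 ⟨r0, hr0Q, hb⟩⟩
      obtain ⟨a, haNA, hamin⟩ := Finset.exists_min_image (Q.biUnion Rule.neg) s hNA
      obtain ⟨ra, hraQ, hara⟩ := Finset.mem_biUnion.1 haNA
      set k := s a with hkdef
      have hmin : ∀ r ∈ Q, ∀ b ∈ r.neg, k ≤ s b := by
        intro r hr b hb
        exact hamin b (Finset.mem_biUnion.2 ⟨r, hr, hb⟩)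
      have hdefL : ∀ (Q' : Set (Rule α)),
          (∀ r ∈ Q', (∀ b ∈ r.neg, s b < s r.head) ∧ (∀ b ∈ r.neg, k ≤ s b)) →
          isDefinite {r ∈ Q' | s r.head ≤ k} := by
        intro Q' h r hr
        by_contra hne
        obtain ⟨b, hb⟩ := Finset.nonempty_iff_ne_empty.2 hne
        have h1 := (h r hr.1).1 b hb
        have h2 := (h r hr.1).2 b hb
        have h3 := hr.2
        omega
      have hdefQ : isDefinite {r ∈ (↑Q : Set (Rule α)) | s r.head ≤ k} :=
        hdefL _ (fun r hr => ⟨(hs r hr).2, hmin r hr⟩)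
      set L : Set (Rule α) := {r ∈ (↑Q : Set (Rule α)) | s r.head ≤ k} with hLdef
      by_cases ha : a ∈ leastModel L
      · -- Case 1: delete all rules with a in the negative body
        set Qf := Q.filter (fun r => a ∉ r.neg) with hQf
        have hsub : Qf ⊆ Q := Finset.filter_subset _ _
        have hlt : (∑ r ∈ Qf, r.neg.card) < n := by
          rw [← hsum]
          refine Finset.sum_lt_sum_of_subset hsub hraQ ?_ ?_ (fun _ _ _ => Nat.zero_le _)
          · intro hmem
            rw [hQf, Finset.mem_filter] at hmem
            exact hmem.2 hara
          · exact Finset.card_pos.2 ⟨a, hara⟩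
        obtain ⟨M, hM⟩ := ih _ hlt Qf s (fun r hr => hs r (hsub hr)) rfl
        have hLeq : {r ∈ (↑Qf : Set (Rule α)) | s r.head ≤ k} = L := by
          ext r
          constructor
          · rintro ⟨hr1, hr2⟩
            exact ⟨hsub hr1, hr2⟩
          · rintro ⟨hr1, hr2⟩
            refine ⟨Finset.mem_coe.2 (Finset.mem_filter.2 ⟨hr1, ?_⟩), hr2⟩
            intro hcontra
            have := (hs r hr1).2 a hcontra
            omega
        have haM : a ∈ M := by
          have hiff := low_strata_iff (Q := (↑Qf : Set (Rule α))) (s := s) (k := k)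
            (fun r hr => hs r (hsub hr)) (by rw [hLeq]; exact hdefQ) hM (le_refl k)
          rw [hLeq] at hiff
          exact hiff.2 ha
        have hredeq : reduct (↑Q : Set (Rule α)) M = reduct (↑Qf : Set (Rule α)) M := by
          ext r'
          constructor
          · rintro ⟨r, hrQ, hneg, rfl⟩
            have hanr : a ∉ r.neg := fun hcontra => hneg a hcontra haM
            exact ⟨r, Finset.mem_coe.2 (Finset.mem_filter.2 ⟨hrQ, hanr⟩), hneg, rfl⟩
          · rintro ⟨r, hrQf, hneg, rfl⟩
            exact ⟨r, hsub hrQf, hneg, rfl⟩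
        refine ⟨M, ?_⟩
        unfold isStable
        rw [hredeq]
        exact hM
      · -- Case 2: remove a from all negative bodies
        set g : Rule α → Rule α := fun r => ⟨r.head, r.pos, r.neg.erase a⟩ with hg
        set Qg := Q.image g with hQg
        have hlt : (∑ r ∈ Qg, r.neg.card) < n := by
          rw [← hsum]
          calc ∑ r ∈ Qg, r.neg.card ≤ ∑ r ∈ Q, (g r).neg.card := sum_image_le' Q g _
            _ < ∑ r ∈ Q, r.neg.card := by
                refine Finset.sum_lt_sum (fun r _ => Finset.card_le_card (Finset.erase_subset _ _))
                  ⟨ra, hraQ, ?_⟩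
                have : (g ra).neg = ra.neg.erase a := rfl
                rw [this, Finset.card_erase_of_mem hara]
                have := Finset.card_pos.2 ⟨a, hara⟩
                omega
        have hsg : ∀ r ∈ Qg, (∀ b ∈ r.pos, s b ≤ s r.head) ∧ (∀ b ∈ r.neg, s b < s r.head) := by
          intro r' hr'
          obtain ⟨r, hrQ, rfl⟩ := Finset.mem_image.1 hr'
          exact ⟨(hs r hrQ).1, fun b hb => (hs r hrQ).2 b (Finset.mem_of_mem_erase hb)⟩
        obtain ⟨M, hM⟩ := ih _ hlt Qg s hsg rfl
        have hLeq : {r ∈ (↑Qg : Set (Rule α)) | s r.head ≤ k} = L := by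
          ext r'
          constructor
          · rintro ⟨hr1, hr2⟩
            obtain ⟨r, hrQ, rfl⟩ := Finset.mem_image.1 (Finset.mem_coe.1 hr1)
            have hrL : r ∈ L := ⟨hrQ, hr2⟩
            have hrneg : r.neg = ∅ := hdefQ r hrL
            have : g r = r := by
              rw [hg]
              conv_rhs => rw [rule_eta hrneg]
              simp [hrneg]
            rw [this]
            exact hrL
          · rintro ⟨hr1, hr2⟩
            have hrneg : r'.neg = ∅ := hdefQ r' ⟨hr1, hr2⟩
            have hgr : g r' = r' := by
              rw [hg]
              conv_rhs => rw [rule_eta hrneg]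
              simp [hrneg]
            refine ⟨Finset.mem_coe.2 (Finset.mem_image.2 ⟨r', hr1, hgr⟩), hr2⟩
        have haM : a ∉ M := by
          intro hcontra
          have hiff := low_strata_iff (Q := (↑Qg : Set (Rule α))) (s := s) (k := k)
            hsg (by rw [hLeq]; exact hdefQ) hM (le_refl k)
          rw [hLeq] at hiff
          exact ha (hiff.1 hcontra)
        have hredeq : reduct (↑Q : Set (Rule α)) M = reduct (↑Qg : Set (Rule α)) M := by
          ext r'
          constructor
          · rintro ⟨r, hrQ, hneg, rfl⟩
            refine ⟨g r, Finset.mem_coe.2 (Finset.mem_image.2 ⟨r, hrQ, rfl⟩), ?_, rfl⟩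
            intro b hb
            exact hneg b (Finset.mem_of_mem_erase hb)
          · rintro ⟨r2, hr2Qg, hneg, rfl⟩
            obtain ⟨r, hrQ, rfl⟩ := Finset.mem_image.1 (Finset.mem_coe.1 hr2Qg)
            refine ⟨r, hrQ, ?_, rfl⟩
            intro b hb
            by_cases hba : b = a
            · subst hba; exact haM
            · exact hneg b (Finset.mem_erase.2 ⟨hba, hb⟩)
        refine ⟨M, ?_⟩
        unfold isStable
        rw [hredeq]
        exact hM

/-- Every finite stratified ground normal logic program has at
least one stable model. -/
theorem finite_stratified_has_stable_model {α : Type} (P : Set (Rule α))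
    (hfin : P.Finite) (hstrat : isStratified P) :
    ∃ M : Set α, isStable M P := by
  obtain ⟨s, hs⟩ := hstrat
  have hQ : (↑hfin.toFinset : Set (Rule α)) = P := hfin.coe_toFinset
  obtain ⟨M, hM⟩ := main_ind _ hfin.toFinset s
    (fun r hr => hs r (hfin.mem_toFinset.1 hr)) rfl
  exact ⟨M, by rwa [hQ] at hM⟩

end

end ASP
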